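/- Let n ≥ 1, let G be a graph containing no copy of the fan F_n, let A be a clique in G with |A| > n such that every vertex of A has degree greater than 2n in G, and let v ∈ A. Then there exists an independent set S ⊆ N(v) ∖ A such that |S| ≥ |N(S) ∩ A| + d(v) − 2n, where d(v) is the degree of v in G, N(v) is the neighbourhood of v, and N(S) = ∪_{s∈S} N(s). -/

import Mathlib

set_option linter.unusedSectionVars false
set_option linter.unusedVariables false
set_option linter.unusedTactic false
set_option maxHeartbeats 1000000

open Finset

namespace FanAux

variable {V : Type*} [Fintype V] [DecidableEq V] (G : SimpleGraph V)

/-- `mIs G B σ` : `σ` is an involution representing a matching of `G` with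
support inside the finset `B`. -/
def mIs (B : Finset V) (σ : V → V) : Prop :=
  (∀ v, σ (σ v) = v) ∧ ∀ v, σ v ≠ v → G.Adj v (σ v) ∧ v ∈ B

/-- support of a matching involution -/
def msupp (σ : V → V) : Finset V := Finset.univ.filter fun v => σ v ≠ v

variable {G}

lemma mem_msupp {σ : V → V} {v : V} : v ∈ msupp σ ↔ σ v ≠ v := by
  simp [msupp]

lemma mIs.invol {B : Finset V} {σ : V → V} (h : mIs G B σ) (v : V) : σ (σ v) = v := h.1 v

lemma mIs.mem {B : Finset V} {σ : V → V} (h : mIs G B σ) {v : V} (hv : σ v ≠ v) : v ∈ B :=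
  (h.2 v hv).2

lemma mIs.adj {B : Finset V} {σ : V → V} (h : mIs G B σ) {v : V} (hv : σ v ≠ v) :
    G.Adj v (σ v) := (h.2 v hv).1

lemma mIs.supp_subset {B : Finset V} {σ : V → V} (h : mIs G B σ) : msupp σ ⊆ B := by
  intro v hv
  exact h.mem (mem_msupp.1 hv)

lemma mIs.sigma_mem {B : Finset V} {σ : V → V} (h : mIs G B σ) {v : V} (hv : σ v ≠ v) :
    σ v ∈ msupp σ := by
  rw [mem_msupp, h.invol v]
  exact fun hc => hv hc.symm

lemma mIs.id (B : Finset V) : mIs G B (fun v => v) :=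
  ⟨fun _ => rfl, fun v hv => absurd rfl hv⟩

lemma mIs.mono {B B' : Finset V} {σ : V → V} (h : mIs G B σ) (hBB : B ⊆ B') : mIs G B' σ :=
  ⟨h.1, fun v hv => ⟨h.adj hv, hBB (h.mem hv)⟩⟩

variable (G)

/-- maximum support size of a matching inside `B` -/
noncomputable def nu (B : Finset V) : ℕ :=
  sSup {k | ∃ σ, mIs G B σ ∧ (msupp σ).card = k}

variable {G}

lemma nuSet_nonempty (B : Finset V) : {k | ∃ σ, mIs G B σ ∧ (msupp σ).card = k}.Nonempty :=
  ⟨0, fun v => v, mIs.id B, by simp [msupp]⟩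

lemma nuSet_bdd (B : Finset V) : BddAbove {k | ∃ σ, mIs G B σ ∧ (msupp σ).card = k} := by
  refine ⟨Fintype.card V, fun k hk => ?_⟩
  obtain ⟨σ, -, rfl⟩ := hk
  exact (Finset.card_filter_le _ _).trans (by simp)

lemma mIs.card_le_nu {B : Finset V} {σ : V → V} (h : mIs G B σ) :
    (msupp σ).card ≤ nu G B :=
  le_csSup (nuSet_bdd B) ⟨σ, h, rfl⟩

lemma nu_spec (B : Finset V) : ∃ σ, mIs G B σ ∧ (msupp σ).card = nu G B :=
  Nat.sSup_mem (nuSet_nonempty B) (nuSet_bdd B)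

lemma nu_mono {B B' : Finset V} (h : B ⊆ B') : nu G B ≤ nu G B' := by
  obtain ⟨σ, hσ, hc⟩ := nu_spec (G := G) B
  rw [← hc]
  exact (hσ.mono h).card_le_nu

/-- add an edge between two unmatched vertices -/
lemma mIs.add_edge {B : Finset V} {σ : V → V} (h : mIs G B σ) {x y : V}
    (hx : σ x = x) (hy : σ y = y) (hxy : x ≠ y) (hadj : G.Adj x y)
    (hxB : x ∈ B) (hyB : y ∈ B) :
    ∃ σ', mIs G B σ' ∧ (msupp σ').card = (msupp σ).card + 2 := by
  classical
  refine ⟨fun v => if v = x then y else if v = y then x else σ v, ⟨?_, ?_⟩, ?_⟩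
  · intro v
    by_cases hvx : v = x
    · subst hvx; simp [hxy.symm, hxy]
    · by_cases hvy : v = y
      · subst hvy; simp [hxy]
      · simp only [if_neg hvx, if_neg hvy]
        by_cases hs : σ v = x
        · have hv : σ x = v := by rw [← hs, h.invol v]
          exact absurd (hx ▸ hv).symm hvx
        · by_cases hs' : σ v = y
          · have : v = y := by rw [← h.invol v, hs', hy]
            exact absurd this hvy
          · simp only [if_neg hs, if_neg hs', h.invol v]
  · intro v hv
    by_cases hvx : v = x
    · subst hvx; simpa [hxy.symm] using ⟨hadj, hxB⟩
    · by_cases hvy : v = y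
      · subst hvy; simpa [hxy, hvx] using ⟨hadj.symm, hyB⟩
      · simp only [if_neg hvx, if_neg hvy] at hv ⊢
        exact ⟨h.adj hv, h.mem hv⟩
  · have hxm : x ∉ msupp σ := by simp [mem_msupp, hx]
    have hym : y ∉ msupp σ := by simp [mem_msupp, hy]
    have : (Finset.univ.filter fun v => (if v = x then y else if v = y then x else σ v) ≠ v)
        = insert x (insert y (msupp σ)) := by
      ext v
      simp only [Finset.mem_filter, Finset.mem_univ, true_and, Finset.mem_insert, mem_msupp]
      by_cases hvx : v = x
      · subst hvx; simp [hxy.symm]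
      · by_cases hvy : v = y
        · subst hvy; simp [hxy, Ne.symm hxy]
        · simp [hvx, hvy]
    rw [msupp, this, Finset.card_insert_of_notMem, Finset.card_insert_of_notMem hym]
    simp only [Finset.mem_insert, mem_msupp, not_or]
    exact ⟨hxy, by simp [hx]⟩

/-- for a maximum matching, two distinct unmatched vertices in `B` are non-adjacent -/
lemma max_no_aug {B : Finset V} {σ : V → V} (h : mIs G B σ) (hmax : (msupp σ).card = nu G B)
    {x y : V} (hx : σ x = x) (hy : σ y = y) (hxy : x ≠ y)
    (hxB : x ∈ B) (hyB : y ∈ B) : ¬ G.Adj x y := by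
  intro hadj
  obtain ⟨σ', hσ', hc⟩ := h.add_edge hx hy hxy hadj hxB hyB
  have := hσ'.card_le_nu
  omega

end FanAux

open Finset

namespace FanAux

variable {V : Type*} [Fintype V] [DecidableEq V] {G : SimpleGraph V}

/-- remove the edge at `x` (and its partner) from the matching -/
lemma mIs.unpair {B : Finset V} {σ : V → V} (h : mIs G B σ) (x : V) :
    ∃ σ', mIs G B σ' ∧ msupp σ' = msupp σ \ {x, σ x} ∧
      (∀ v, v ≠ x → v ≠ σ x → σ' v = σ v) ∧ σ' x = x := by
  classical
  refine ⟨fun v => if v = x ∨ v = σ x then v else σ v, ⟨?_, ?_⟩, ?_, fun v h1 h2 => by simp [h1, h2], by simp⟩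
  · intro v
    by_cases hv : v = x ∨ v = σ x
    · simp [hv]
    · push_neg at hv
      have h1 : σ v ≠ x := fun hc => hv.2 (by rw [← hc, h.invol])
      have h2 : σ v ≠ σ x := fun hc => hv.1 (by
        have := congrArg σ hc; rwa [h.invol, h.invol] at this)
      simp [hv.1, hv.2, h1, h2, h.invol v]
  · intro v hv
    by_cases hvv : v = x ∨ v = σ x
    · simp [hvv] at hv
    · simp only [if_neg hvv] at hv ⊢
      exact ⟨h.adj hv, h.mem hv⟩
  · ext v
    simp only [mem_msupp, Finset.mem_sdiff, Finset.mem_insert, Finset.mem_singleton]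
    by_cases hvv : v = x ∨ v = σ x
    · simp [hvv]
    · push_neg at hvv
      simp [hvv.1, hvv.2]

lemma msupp_even {σ : V → V} {B : Finset V} (h : mIs G B σ) : Even (msupp σ).card := by
  classical
  generalize hc : (msupp σ).card = c
  induction c using Nat.strong_induction_on generalizing σ with
  | _ c ih =>
    rcases Finset.eq_empty_or_nonempty (msupp σ) with he | ⟨x, hx⟩
    · simp [he] at hc; simp [← hc]
    · have hxs : σ x ≠ x := mem_msupp.1 hx
      have hσx : σ x ∈ msupp σ := h.sigma_mem hxs
      obtain ⟨σ', hσ', hsupp, -, -⟩ := h.unpair x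
      have hcard : (msupp σ').card = c - 2 := by
        rw [hsupp, Finset.card_sdiff_of_subset (by
          intro v hv
          simp only [Finset.mem_insert, Finset.mem_singleton] at hv
          rcases hv with rfl | rfl <;> assumption)]
        rw [hc, Finset.card_insert_of_notMem (by simp [Ne.symm hxs]), Finset.card_singleton]
      have hc2 : 2 ≤ c := by
        rw [← hc]
        refine Finset.one_lt_card.2 ⟨x, hx, σ x, hσx, Ne.symm hxs⟩
      obtain ⟨r, hr⟩ := ih (c - 2) (by omega) hσ' hcard
      exact ⟨r + 1, by omega⟩

lemma nu_even (B : Finset V) : Even (nu G B) := by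
  obtain ⟨σ, hσ, hc⟩ := nu_spec (G := G) B
  exact hc ▸ msupp_even hσ

/-- removing a vertex decreases `nu` by at most 2 -/
lemma nu_erase_ge {B : Finset V} (u : V) : nu G B ≤ nu G (B.erase u) + 2 := by
  obtain ⟨σ, hσ, hc⟩ := nu_spec (G := G) B
  by_cases hu : σ u = u
  · have : mIs G (B.erase u) σ := ⟨hσ.1, fun v hv => ⟨hσ.adj hv,
      Finset.mem_erase.2 ⟨fun hvu => hv (hvu ▸ hu), hσ.mem hv⟩⟩⟩
    have := this.card_le_nu
    omega
  · obtain ⟨σ', hσ', hsupp, -, -⟩ := hσ.unpair u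
    have h1 : mIs G (B.erase u) σ' := by
      refine ⟨hσ'.1, fun v hv => ⟨hσ'.adj hv, ?_⟩⟩
      have hvm : v ∈ msupp σ' := mem_msupp.2 hv
      rw [hsupp] at hvm
      simp only [Finset.mem_sdiff, Finset.mem_insert, Finset.mem_singleton, not_or] at hvm
      exact Finset.mem_erase.2 ⟨hvm.2.1, hσ.mem (mem_msupp.1 hvm.1)⟩
    have h2 : (msupp σ).card ≤ (msupp σ').card + 2 := by
      rw [hsupp]
      have hle := Finset.card_le_card_sdiff_add_card (s := msupp σ) (t := {u, σ u})
      have : ({u, σ u} : Finset V).card ≤ 2 := (Finset.card_insert_le _ _).trans (by simp)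
      omega
    have := h1.card_le_nu
    omega

end FanAux

open Finset

namespace FanAux

variable {V : Type*} [Fintype V] [DecidableEq V] {G : SimpleGraph V}

/-- restriction of a matching to a closed subset `K` -/
lemma mIs.restrict {B K : Finset V} {σ : V → V} (h : mIs G B σ) (hKB : K ⊆ B)
    (hcl : ∀ y ∈ K, ∀ z, G.Adj y z → z ∈ B → z ∈ K) :
    mIs G K (fun v => if v ∈ K then σ v else v) ∧
    (Finset.univ.filter fun v => (if v ∈ K then σ v else v) ≠ v) = msupp σ ∩ K := by
  classical
  have key : ∀ v ∈ K, σ v ≠ v → σ v ∈ K := by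
    intro v hv hsv
    exact hcl v hv (σ v) (h.adj hsv) (h.mem (mem_msupp.1 (h.sigma_mem hsv)))
  constructor
  · constructor
    · intro v
      by_cases hv : v ∈ K
      · by_cases hsv : σ v = v
        · simp [hv, hsv]
        · simp [hv, key v hv hsv, h.invol v]
      · simp [hv]
    · intro v hv
      by_cases hvK : v ∈ K
      · simp only [if_pos hvK] at hv ⊢
        exact ⟨h.adj hv, hvK⟩
      · simp [hvK] at hv
  · ext v
    by_cases hv : v ∈ K <;> simp [hv, mem_msupp]

/-- restriction of a matching to the complement of a closed subset `K` -/
lemma mIs.restrict_compl {B K : Finset V} {σ : V → V} (h : mIs G B σ) (hKB : K ⊆ B)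
    (hcl : ∀ y ∈ K, ∀ z, G.Adj y z → z ∈ B → z ∈ K) :
    mIs G (B \ K) (fun v => if v ∈ K then v else σ v) ∧
    (Finset.univ.filter fun v => (if v ∈ K then v else σ v) ≠ v) = msupp σ \ K := by
  classical
  have key : ∀ v, v ∉ K → σ v ≠ v → σ v ∉ K := by
    intro v hv hsv hc
    exact hv (hcl (σ v) hc v (h.adj hsv).symm (h.mem hsv))
  constructor
  · constructor
    · intro v
      by_cases hv : v ∈ K
      · simp [hv]
      · by_cases hsv : σ v = v
        · simp [hv, hsv]
        · simp [hv, key v hv hsv, h.invol v]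
    · intro v hv
      by_cases hvK : v ∈ K
      · simp [hvK] at hv
      · simp only [if_neg hvK] at hv ⊢
        exact ⟨h.adj hv, Finset.mem_sdiff.2 ⟨h.mem hv, hvK⟩⟩
  · ext v
    by_cases hv : v ∈ K <;> simp [hv, mem_msupp]

/-- gluing matchings on `K` and `B \ K` -/
lemma mIs.glue {B K : Finset V} {σ₁ σ₂ : V → V} (h₁ : mIs G K σ₁) (h₂ : mIs G (B \ K) σ₂)
    (hKB : K ⊆ B) :
    mIs G B (fun v => if v ∈ K then σ₁ v else σ₂ v) ∧
    (Finset.univ.filter fun v => (if v ∈ K then σ₁ v else σ₂ v) ≠ v)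
      = msupp σ₁ ∪ msupp σ₂ := by
  classical
  have k1 : ∀ v ∈ K, σ₁ v ≠ v → σ₁ v ∈ K := fun v hv hsv =>
    h₁.mem (mem_msupp.1 (h₁.sigma_mem hsv))
  have k2 : ∀ v, σ₂ v ≠ v → σ₂ v ∉ K := by
    intro v hsv
    have := h₂.mem (mem_msupp.1 (h₂.sigma_mem hsv))
    exact (Finset.mem_sdiff.1 this).2
  have k2' : ∀ v, σ₂ v ≠ v → v ∉ K := by
    intro v hsv
    exact (Finset.mem_sdiff.1 (h₂.mem hsv)).2
  have supp1K : ∀ v, v ∈ K → σ₂ v = v := by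
    intro v hv
    by_contra hc
    exact k2' v hc hv
  constructor
  · constructor
    · intro v
      by_cases hv : v ∈ K
      · by_cases hsv : σ₁ v = v
        · simp [hv, hsv]
        · simp [hv, k1 v hv hsv, h₁.invol v]
      · by_cases hsv : σ₂ v = v
        · simp [hv, hsv]
        · simp [hv, k2 v hsv, h₂.invol v]
    · intro v hv
      by_cases hvK : v ∈ K
      · simp only [if_pos hvK] at hv ⊢
        exact ⟨h₁.adj hv, hKB (h₁.mem hv)⟩
      · simp only [if_neg hvK] at hv ⊢
        exact ⟨h₂.adj hv, (Finset.mem_sdiff.1 (h₂.mem hv)).1⟩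
  · ext v
    by_cases hv : v ∈ K
    · simp [hv, mem_msupp, supp1K v hv]
    · have : σ₁ v = v := by
        by_contra hc
        exact hv (h₁.mem hc)
      simp [hv, mem_msupp, this]

/-- decomposition of `nu` over a closed subset -/
lemma nu_split {B K : Finset V} (hKB : K ⊆ B)
    (hcl : ∀ y ∈ K, ∀ z, G.Adj y z → z ∈ B → z ∈ K) :
    nu G B = nu G K + nu G (B \ K) := by
  classical
  apply le_antisymm
  · obtain ⟨σ, hσ, hc⟩ := nu_spec (G := G) B
    obtain ⟨h1, hs1⟩ := hσ.restrict hKB hcl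
    obtain ⟨h2, hs2⟩ := hσ.restrict_compl hKB hcl
    have e1 := h1.card_le_nu
    have e2 := h2.card_le_nu
    rw [show msupp (fun v => if v ∈ K then σ v else v)
        = Finset.univ.filter fun v => (if v ∈ K then σ v else v) ≠ v from rfl, hs1] at e1
    rw [show msupp (fun v => if v ∈ K then v else σ v)
        = Finset.univ.filter fun v => (if v ∈ K then v else σ v) ≠ v from rfl, hs2] at e2
    have : (msupp σ ∩ K).card + (msupp σ \ K).card = (msupp σ).card :=
      Finset.card_inter_add_card_sdiff _ _
    omega
  · obtain ⟨σ₁, h₁, hc₁⟩ := nu_spec (G := G) K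
    obtain ⟨σ₂, h₂, hc₂⟩ := nu_spec (G := G) (B \ K)
    obtain ⟨hg, hs⟩ := h₁.glue h₂ hKB
    have := hg.card_le_nu
    rw [show msupp (fun v => if v ∈ K then σ₁ v else σ₂ v)
        = Finset.univ.filter fun v => (if v ∈ K then σ₁ v else σ₂ v) ≠ v from rfl, hs] at this
    have hdisj : Disjoint (msupp σ₁) (msupp σ₂) := by
      refine Finset.disjoint_left.2 fun v hv1 hv2 => ?_
      have := h₁.mem (mem_msupp.1 hv1)
      have := h₂.mem (mem_msupp.1 hv2)
      exact (Finset.mem_sdiff.1 ‹v ∈ B \ K›).2 ‹v ∈ K›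
    rw [Finset.card_union_of_disjoint hdisj] at this
    omega

end FanAux

open Finset

namespace FanAux

variable {V : Type*}

/-- an interior vertex of a path has two distinct neighbours on the path -/
lemma path_interior {GG : SimpleGraph V} :
    ∀ {s t : V} (p : GG.Walk s t), p.IsPath → ∀ m ∈ p.support, m ≠ s → m ≠ t →
      ∃ a b, a ≠ b ∧ GG.Adj m a ∧ GG.Adj m b ∧ a ∈ p.support ∧ b ∈ p.support := by
  intro s t p
  induction p with
  | nil =>
    intro hp m hm hms hmt
    simp only [SimpleGraph.Walk.support_nil, List.mem_singleton] at hm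
    exact absurd hm hms
  | @cons s c t h q ih =>
    intro hp m hm hms hmt
    rw [SimpleGraph.Walk.support_cons, List.mem_cons] at hm
    rcases hm with rfl | hm
    · exact absurd rfl hms
    have hq : q.IsPath := hp.of_cons
    by_cases hmc : m = c
    · subst hmc
      cases q with
      | nil => exact absurd rfl hmt
      | @cons _ c₂ _ h₂ r =>
        refine ⟨s, c₂, ?_, h.symm, h₂, ?_, ?_⟩
        · intro hc
          have hns : s ∉ (SimpleGraph.Walk.cons h₂ r).support :=
            (SimpleGraph.Walk.cons_isPath_iff h _).1 hp |>.2
          refine hns ?_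
          rw [hc, SimpleGraph.Walk.support_cons]
          exact List.mem_cons_of_mem _ r.start_mem_support
        · exact SimpleGraph.Walk.start_mem_support _
        · rw [SimpleGraph.Walk.support_cons]
          refine List.mem_cons_of_mem _ ?_
          rw [SimpleGraph.Walk.support_cons]
          exact List.mem_cons_of_mem _ r.start_mem_support
    · obtain ⟨a, b, hab, ha, hb, has, hbs⟩ := ih hq m hm hmc hmt
      exact ⟨a, b, hab, ha, hb,
        by rw [SimpleGraph.Walk.support_cons]; exact List.mem_cons_of_mem _ has,
        by rw [SimpleGraph.Walk.support_cons]; exact List.mem_cons_of_mem _ hbs⟩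

/-- an endpoint of a nontrivial path has a neighbour on the path -/
lemma path_endpoint {GG : SimpleGraph V} {s t : V} (p : GG.Walk s t) (hst : s ≠ t) :
    ∃ a, GG.Adj s a ∧ a ∈ p.support := by
  cases p with
  | nil => exact absurd rfl hst
  | @cons _ c _ h q =>
    refine ⟨c, h, ?_⟩
    rw [SimpleGraph.Walk.support_cons]
    exact List.mem_cons_of_mem _ q.start_mem_support

/-- a walk from outside a list into the list crosses the boundary -/
lemma walk_hit {GG : SimpleGraph V} (L : List V) :
    ∀ {s t : V}, GG.Walk s t → s ∉ L → t ∈ L →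
      ∃ m pm, m ∈ L ∧ pm ∉ L ∧ GG.Adj pm m := by
  intro s t w
  induction w with
  | nil => intro hs ht; exact absurd ht hs
  | @cons s c t h q ih =>
    intro hs ht
    by_cases hc : c ∈ L
    · exact ⟨c, s, hc, hs, h⟩
    · exact ih hc ht

/-- a connected graph of max degree 2 has at most two vertices of degree ≤ 1 -/
lemma lowdeg {GG : SimpleGraph V} {x y c : V}
    (hxy : x ≠ y) (hxc : x ≠ c) (hyc : y ≠ c)
    (hrxy : GG.Reachable x y) (hrxc : GG.Reachable x c)
    (hdeg2 : ∀ v a b d, GG.Adj v a → GG.Adj v b → GG.Adj v d → a = b ∨ a = d ∨ b = d)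
    (hx : ∀ p q, GG.Adj x p → GG.Adj x q → p = q)
    (hy : ∀ p q, GG.Adj y p → GG.Adj y q → p = q)
    (hc : ∀ p q, GG.Adj c p → GG.Adj c q → p = q) : False := by
  obtain ⟨P1, hpath, -⟩ := hrxy.exists_path_of_dist
  -- c is not on the path P1
  have hcP1 : c ∉ P1.support := by
    intro hcm
    obtain ⟨a, b, hab, ha, hb, -, -⟩ :=
      path_interior P1 hpath c hcm (Ne.symm hxc) (Ne.symm hyc)
    exact hab (hc a b ha hb)
  -- walk from c to x hits the path
  obtain ⟨w⟩ := hrxc.symm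
  obtain ⟨m, pm, hmL, hpmL, hadj⟩ :=
    walk_hit P1.support w hcP1 P1.start_mem_support
  by_cases hmx : m = x
  · subst hmx
    obtain ⟨a, ha, haL⟩ := path_endpoint P1 hxy
    have := hx pm a hadj.symm ha
    exact hpmL (this ▸ haL)
  · by_cases hmy : m = y
    · subst hmy
      obtain ⟨a, ha, haL⟩ := path_endpoint P1.reverse (Ne.symm hxy)
      rw [SimpleGraph.Walk.support_reverse, List.mem_reverse] at haL
      have := hy pm a hadj.symm ha
      exact hpmL (this ▸ haL)
    · obtain ⟨a, b, hab, ha, hb, haL, hbL⟩ :=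
        path_interior P1 hpath m hmL hmx hmy
      rcases hdeg2 m pm a b hadj.symm ha hb with h1 | h1 | h1
      · exact hpmL (h1 ▸ haL)
      · exact hpmL (h1 ▸ hbL)
      · exact hab h1

/-- the subgraph of `G` induced (as a spanning graph) by a finset `B` -/
def sub (G : SimpleGraph V) (B : Finset V) [DecidableEq V] : SimpleGraph V where
  Adj x y := G.Adj x y ∧ x ∈ B ∧ y ∈ B
  symm := ⟨fun x y ⟨h, hx, hy⟩ => ⟨h.symm, hy, hx⟩⟩
  loopless := ⟨fun x ⟨h, _, _⟩ => G.loopless.irrefl x h⟩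

lemma sub_adj {G : SimpleGraph V} {B : Finset V} [DecidableEq V] {x y : V} :
    (sub G B).Adj x y ↔ G.Adj x y ∧ x ∈ B ∧ y ∈ B := Iff.rfl

/-- walks in `sub G B` starting in a closed set `K` transfer to `sub G K` -/
lemma walk_transfer {G : SimpleGraph V} {B K : Finset V} [DecidableEq V]
    (hcl : ∀ y ∈ K, ∀ z, G.Adj y z → z ∈ B → z ∈ K) :
    ∀ {s t : V}, (sub G B).Walk s t → s ∈ K → (sub G K).Reachable s t := by
  intro s t w
  induction w with
  | nil => intro hs; exact SimpleGraph.Reachable.refl _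
  | @cons s c t h q ih =>
    intro hs
    have hcK : c ∈ K := hcl s hs c h.1 h.2.2
    exact (SimpleGraph.Adj.reachable
      (show (sub G K).Adj s c from ⟨h.1, hs, hcK⟩)).trans (ih hcK)

end FanAux

open Finset

namespace FanAux

variable {V : Type*} [Fintype V] [DecidableEq V] {G : SimpleGraph V}

/-- flipping a matching pair on a closed set of vertices -/
lemma flip {K : Finset V} {σ τ : V → V}
    (hσ : mIs G K σ) (hτ : mIs G K τ) (Pp : V → Prop) [DecidablePred Pp]
    (clσ : ∀ v, Pp v → σ v ≠ v → σ v ≠ τ v → Pp (σ v))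
    (clτ : ∀ v, Pp v → τ v ≠ v → τ v ≠ σ v → Pp (τ v))
    (P : Finset V) (hPmem : ∀ v, v ∈ P ↔ Pp v) :
    mIs G K (fun v => if Pp v then τ v else σ v) ∧
    msupp (fun v => if Pp v then τ v else σ v)
      = (msupp τ ∩ P) ∪ (msupp σ \ P) := by
  have hinv : ∀ v, (fun v => if Pp v then τ v else σ v)
      ((fun v => if Pp v then τ v else σ v) v) = v := by
    intro v
    by_cases hv : Pp v
    · simp only [if_pos hv]
      by_cases hτv : τ v = v
      · simp [hτv, hv]
      · by_cases hv2 : Pp (τ v)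
        · simp [hv2, hτ.invol v]
        · have heq : τ v = σ v := by
            by_contra hne
            exact hv2 (clτ v hv hτv hne)
          rw [if_neg hv2, heq, hσ.invol]
    · simp only [if_neg hv]
      by_cases hσv : σ v = v
      · simp [hσv, hv]
      · by_cases hv2 : Pp (σ v)
        · have heq : τ (σ v) = v := by
            by_contra hne
            have hPv : Pp (σ (σ v)) :=
              clσ (σ v) hv2 (by rw [hσ.invol]; exact fun hc => hσv hc.symm)
                (by rw [hσ.invol]; exact fun hc => hne hc.symm)
            rw [hσ.invol] at hPv
            exact hv hPv
          rw [if_pos hv2, heq]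
        · simp [hv2, hσ.invol v]
  refine ⟨⟨hinv, ?_⟩, ?_⟩
  · intro v hv
    by_cases hvP : Pp v
    · simp only [if_pos hvP] at hv ⊢
      exact ⟨hτ.adj hv, hτ.mem hv⟩
    · simp only [if_neg hvP] at hv ⊢
      exact ⟨hσ.adj hv, hσ.mem hv⟩
  · ext v
    simp only [mem_msupp, Finset.mem_union, Finset.mem_inter, Finset.mem_sdiff,
      Finset.mem_filter, Finset.mem_univ, true_and, msupp, hPmem]
    by_cases hvP : Pp v <;> simp [hvP]

/-- Gallai's lemma: in a connected graph in which every vertex is missed by some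
maximum matching, a maximum matching misses at most one vertex. -/
lemma gallai (K : Finset V)
    (hconn : ∀ y ∈ K, ∀ z ∈ K, (sub G K).Reachable y z)
    (hevery : ∀ u ∈ K, ∃ σ, mIs G K σ ∧ (msupp σ).card = nu G K ∧ σ u = u) :
    K.card ≤ nu G K + 1 := by
  classical
  by_contra hcon
  push_neg at hcon
  have hcon' : nu G K + 2 ≤ K.card := hcon
  -- the set of realized distances between unmatched pairs of maximum matchings
  set D : Set ℕ := {d | ∃ σ u w, mIs G K σ ∧ (msupp σ).card = nu G K ∧ u ∈ K ∧ w ∈ K ∧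
    σ u = u ∧ σ w = w ∧ u ≠ w ∧ (sub G K).dist u w = d} with hD
  have hDne : D.Nonempty := by
    obtain ⟨σ, hσ, hmax⟩ := nu_spec (G := G) K
    have hsub : msupp σ ⊆ K := hσ.supp_subset
    have hcard : 1 < (K \ msupp σ).card := by
      rw [Finset.card_sdiff_of_subset hsub]
      omega
    obtain ⟨u, hu, w, hw, hne⟩ := Finset.one_lt_card.1 hcard
    obtain ⟨huK, hu2⟩ := Finset.mem_sdiff.1 hu
    obtain ⟨hwK, hw2⟩ := Finset.mem_sdiff.1 hw
    rw [mem_msupp] at hu2 hw2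
    push_neg at hu2 hw2
    exact ⟨_, σ, u, w, hσ, hmax, huK, hwK, hu2, hw2, hne, rfl⟩
  obtain ⟨σ, u, w, hσ, hσmax, hu, hw, hσu, hσw, hne, hdist⟩ := Nat.sInf_mem hDne
  set d₀ := sInf D with hd₀
  have hr : (sub G K).Reachable u w := hconn u hu w hw
  have hd₀pos : 0 < d₀ := hdist ▸ hr.pos_dist_of_ne hne
  have hd₀2 : 2 ≤ d₀ := by
    by_contra h2
    push_neg at h2
    have h1 : (sub G K).dist u w = 1 := by omega
    have : (sub G K).Adj u w := SimpleGraph.dist_eq_one_iff_adj.1 h1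
    exact absurd this.1 (max_no_aug hσ hσmax hσu hσw hne hu hw)
  -- a shortest walk, its second vertex z
  obtain ⟨p, hplen⟩ := hr.exists_walk_length_eq_dist
  rw [hdist] at hplen
  cases p with
  | nil => simp at hplen; omega
  | @cons _ z _ h q =>
    have hz : z ∈ K := h.2.2
    have hGuz : G.Adj u z := h.1
    have huz : u ≠ z := hGuz.ne
    rw [SimpleGraph.Walk.length_cons] at hplen
    have hdzw : (sub G K).dist z w ≤ d₀ - 1 := by
      have := SimpleGraph.dist_le q
      omega
    have hzw : z ≠ w := by
      rintro rfl
      have : (sub G K).dist u z = 1 := SimpleGraph.dist_eq_one_iff_adj.2 h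
      rw [hdist] at this
      omega
    obtain ⟨τ, hτ, hτmax, hτz⟩ := hevery z hz
    have hτu : τ u ≠ u := by
      intro hc
      exact max_no_aug hτ hτmax hc hτz huz hu hz hGuz
    -- the auxiliary symmetric-difference graph
    set Aux : SimpleGraph V :=
      { Adj := fun p q => p ≠ q ∧ ((σ p = q ∧ τ p ≠ q) ∨ (τ p = q ∧ σ p ≠ q))
        symm := by
          constructor
          rintro p q ⟨hpq, hor⟩
          refine ⟨hpq.symm, ?_⟩
          rcases hor with ⟨h1, h2⟩ | ⟨h1, h2⟩
          · refine Or.inl ⟨by rw [← h1, hσ.invol], fun hc => h2 ?_⟩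
            rw [← hc, hτ.invol]
          · refine Or.inr ⟨by rw [← h1, hτ.invol], fun hc => h2 ?_⟩
            rw [← hc, hσ.invol]
        loopless := ⟨fun p hp => hp.1 rfl⟩ } with hAux
    have aux_cases : ∀ {a b : V}, Aux.Adj a b → b = σ a ∨ b = τ a := by
      rintro a b ⟨-, hor⟩
      rcases hor with ⟨h1, -⟩ | ⟨h1, -⟩
      · exact Or.inl h1.symm
      · exact Or.inr h1.symm
    set Pp : V → Prop := fun v => Aux.Reachable u v with hPp
    have hPu : Pp u := SimpleGraph.Reachable.refl u
    have clσ : ∀ v, Pp v → σ v ≠ v → σ v ≠ τ v → Pp (σ v) := by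
      intro v hv h1 h2
      refine hv.trans (SimpleGraph.Adj.reachable ?_)
      exact ⟨Ne.symm h1, Or.inl ⟨rfl, fun hc => h2 hc.symm⟩⟩
    have clτ : ∀ v, Pp v → τ v ≠ v → τ v ≠ σ v → Pp (τ v) := by
      intro v hv h1 h2
      refine hv.trans (SimpleGraph.Adj.reachable ?_)
      exact ⟨Ne.symm h1, Or.inr ⟨rfl, fun hc => h2 hc.symm⟩⟩
    set P : Finset V := Finset.univ.filter Pp with hPdef
    -- the two flipped matchings
    have hPmem : ∀ v, v ∈ P ↔ Pp v := by
      intro v; rw [hPdef]; simp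
    obtain ⟨hf1, hf1supp⟩ := flip hσ hτ Pp clσ clτ P hPmem
    obtain ⟨hf2, hf2supp⟩ := flip hτ hσ Pp clτ clσ P hPmem
    have hdisj1 : Disjoint (msupp τ ∩ P) (msupp σ \ P) :=
      Finset.disjoint_left.2 fun a ha hb =>
        (Finset.mem_sdiff.1 hb).2 (Finset.mem_inter.1 ha).2
    have hdisj2 : Disjoint (msupp σ ∩ P) (msupp τ \ P) :=
      Finset.disjoint_left.2 fun a ha hb =>
        (Finset.mem_sdiff.1 hb).2 (Finset.mem_inter.1 ha).2
    have hsplitσ : (msupp σ ∩ P).card + (msupp σ \ P).card = nu G K := by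
      rw [Finset.card_inter_add_card_sdiff, hσmax]
    have hsplitτ : (msupp τ ∩ P).card + (msupp τ \ P).card = nu G K := by
      rw [Finset.card_inter_add_card_sdiff, hτmax]
    have hc1 : (msupp τ ∩ P).card + (msupp σ \ P).card ≤ nu G K := by
      have := hf1.card_le_nu
      rw [hf1supp, Finset.card_union_of_disjoint hdisj1] at this
      exact this
    have hc2 : (msupp σ ∩ P).card + (msupp τ \ P).card ≤ nu G K := by
      have := hf2.card_le_nu
      rw [hf2supp, Finset.card_union_of_disjoint hdisj2] at this
      exact this
    have hkey : (msupp τ ∩ P).card = (msupp σ ∩ P).card := by omega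
    have hf1max : (msupp (fun v => if Pp v then τ v else σ v)).card = nu G K := by
      rw [hf1supp, Finset.card_union_of_disjoint hdisj1, hkey]
      exact hsplitσ
    -- fixed points inside the component
    set Pσ : Finset V := P.filter (fun v => σ v = v) with hPσdef
    set Pτ : Finset V := P.filter (fun v => τ v = v) with hPτdef
    have hinterσ : msupp σ ∩ P = P.filter (fun v => σ v ≠ v) := by
      ext v; simp [msupp, and_comm]
    have hinterτ : msupp τ ∩ P = P.filter (fun v => τ v ≠ v) := by
      ext v; simp [msupp, and_comm]
    have hcardσ : Pσ.card + (msupp σ ∩ P).card = P.card := by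
      rw [hPσdef, hinterσ]
      exact Finset.card_filter_add_card_filter_not _
    have hcardτ : Pτ.card + (msupp τ ∩ P).card = P.card := by
      rw [hPτdef, hinterτ]
      exact Finset.card_filter_add_card_filter_not _
    have hab : Pσ.card = Pτ.card := by omega
    have huPσ : u ∈ Pσ := by
      rw [hPσdef]
      exact Finset.mem_filter.2 ⟨Finset.mem_filter.2 ⟨Finset.mem_univ _, hPu⟩, hσu⟩
    -- no vertex of the component is fixed by both matchings
    have no_both : ∀ x, Pp x → σ x = x → τ x = x → False := by
      intro x hx h1 h2
      have hxu : x ≠ u := fun hc => hτu (hc ▸ h2)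
      obtain ⟨wk⟩ := hx
      cases hwr : wk.reverse with
      | nil =>
        have := congrArg SimpleGraph.Walk.length hwr
        rw [SimpleGraph.Walk.length_reverse] at this
        have : wk.length = 0 := by simpa using this
        exact hxu (SimpleGraph.Walk.eq_of_length_eq_zero this).symm
      | cons ha q =>
        rcases aux_cases ha with hb | hb
        · exact ha.1 (hb.trans h1).symm
        · exact ha.1 (hb.trans h2).symm
    -- the component contains exactly one σ-unmatched vertex, namely u
    have hPσ_eq : Pσ = {u} := by
      rw [Finset.eq_singleton_iff_unique_mem]
      refine ⟨huPσ, fun x hx => ?_⟩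
      by_contra hxu
      obtain ⟨hxP, hσx⟩ := Finset.mem_filter.1 hx
      have hxPp : Pp x := (Finset.mem_filter.1 hxP).2
      have hPτne : Pτ.Nonempty := by
        rw [← Finset.card_pos, ← hab]
        exact Finset.card_pos.2 ⟨u, huPσ⟩
      obtain ⟨t, ht⟩ := hPτne
      obtain ⟨htP, hτt⟩ := Finset.mem_filter.1 ht
      have htPp : Pp t := (Finset.mem_filter.1 htP).2
      have htu : u ≠ t := fun hc => hτu (hc ▸ hτt)
      have htx : x ≠ t := by
        intro hc
        exact no_both t htPp (hc ▸ hσx) hτt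
      have uniqσ : ∀ (x0 : V), σ x0 = x0 →
          ∀ p' q', Aux.Adj x0 p' → Aux.Adj x0 q' → p' = q' := by
        intro x0 hfix p' q' h1 h2
        have e1 : p' = τ x0 := by
          rcases aux_cases h1 with h | h
          · exact absurd (h.trans hfix) (Ne.symm h1.1)
          · exact h
        have e2 : q' = τ x0 := by
          rcases aux_cases h2 with h | h
          · exact absurd (h.trans hfix) (Ne.symm h2.1)
          · exact h
        rw [e1, e2]
      have uniqτ : ∀ (x0 : V), τ x0 = x0 →
          ∀ p' q', Aux.Adj x0 p' → Aux.Adj x0 q' → p' = q' := by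
        intro x0 hfix p' q' h1 h2
        have e1 : p' = σ x0 := by
          rcases aux_cases h1 with h | h
          · exact h
          · exact absurd (h.trans hfix) (Ne.symm h1.1)
        have e2 : q' = σ x0 := by
          rcases aux_cases h2 with h | h
          · exact h
          · exact absurd (h.trans hfix) (Ne.symm h2.1)
        rw [e1, e2]
      refine lowdeg (GG := Aux) (x := u) (y := x) (c := t)
        (fun hc => hxu hc.symm) htu htx hxPp htPp ?_ ?_ ?_ ?_
      · intro v a b d h1 h2 h3
        rcases aux_cases h1 with h | h <;> rcases aux_cases h2 with h' | h' <;>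
          rcases aux_cases h3 with h'' | h'' <;>
          first
          | exact Or.inl (h.trans h'.symm)
          | exact Or.inr (Or.inl (h.trans h''.symm))
          | exact Or.inr (Or.inr (h'.trans h''.symm))
      · exact uniqσ u hσu
      · exact uniqσ x hσx
      · exact uniqτ t hτt
    -- now the endgame
    by_cases hzP : Pp z
    · -- flip σ along the component: get a maximum matching missing z and w
      have hσ'z : (fun v => if Pp v then τ v else σ v) z = z := by
        simp only [if_pos hzP]; exact hτz
      have hwP : ¬ Pp w := by
        intro hc
        have : w ∈ Pσ := Finset.mem_filter.2
          ⟨Finset.mem_filter.2 ⟨Finset.mem_univ _, hc⟩, hσw⟩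
        rw [hPσ_eq, Finset.mem_singleton] at this
        exact hne this.symm
      have hσ'w : (fun v => if Pp v then τ v else σ v) w = w := by
        simp only [if_neg hwP]; exact hσw
      have hmem : (sub G K).dist z w ∈ D :=
        ⟨_, z, w, hf1, hf1max, hz, hw, hσ'z, hσ'w, hzw, rfl⟩
      have := Nat.sInf_le hmem
      omega
    · -- flip τ along the component: maximum matching missing both u and z, adjacent
      have hf2max : (msupp (fun v => if Pp v then σ v else τ v)).card = nu G K := by
        rw [hf2supp, Finset.card_union_of_disjoint hdisj2, ← hkey]
        exact hsplitτ
      have hτ'u : (fun v => if Pp v then σ v else τ v) u = u := by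
        simp only [if_pos hPu]; exact hσu
      have hτ'z : (fun v => if Pp v then σ v else τ v) z = z := by
        simp only [if_neg hzP]; exact hτz
      exact max_no_aug hf2 hf2max hτ'u hτ'z huz hu hz hGuz

end FanAux

open Finset

namespace FanAux

variable {V : Type*} [Fintype V] [DecidableEq V] {G : SimpleGraph V} [DecidableRel G.Adj]

lemma main_ind : ∀ (N : ℕ) (B X : Finset V), B.card ≤ N → X ⊆ B →
    (∀ x ∈ X, ∀ y ∈ X, x ≠ y → G.Adj x y) →
    ∃ S : Finset V, S ⊆ B \ X ∧ (∀ s ∈ S, ∀ t ∈ S, s ≠ t → ¬ G.Adj s t) ∧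
      B.card + (X.filter fun x => ∃ s ∈ S, G.Adj s x).card ≤ S.card + nu G B + 1 := by
  intro N
  induction N with
  | zero =>
    intro B X hcard hXB hclq
    have hB : B = ∅ := Finset.card_eq_zero.1 (Nat.le_zero.1 hcard)
    have hX : X = ∅ := Finset.subset_empty.1 (hB ▸ hXB)
    refine ⟨∅, by simp, by simp, ?_⟩
    simp [hB, hX]
  | succ N ih =>
    intro B X hcard hXB hclq
    by_cases hess : ∃ u ∈ B, nu G (B.erase u) + 2 ≤ nu G B
    · obtain ⟨u, hu, hnu⟩ := hess
      have hcard' : (B.erase u).card ≤ N := by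
        have := Finset.card_erase_add_one hu
        omega
      obtain ⟨S, hS, hind, hbound⟩ := ih (B.erase u) (X.erase u) hcard'
        (Finset.erase_subset_erase u hXB)
        (fun x hx y hy hxy => hclq x (Finset.mem_of_mem_erase hx) y
          (Finset.mem_of_mem_erase hy) hxy)
      refine ⟨S, ?_, hind, ?_⟩
      · intro s hs
        obtain ⟨hs1, hs2⟩ := Finset.mem_sdiff.1 (hS hs)
        refine Finset.mem_sdiff.2 ⟨Finset.mem_of_mem_erase hs1, fun hsX => ?_⟩
        exact hs2 (Finset.mem_erase.2 ⟨(Finset.mem_erase.1 hs1).1, hsX⟩)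
      · have h1 : (X.filter fun x => ∃ s ∈ S, G.Adj s x).card ≤
            ((X.erase u).filter fun x => ∃ s ∈ S, G.Adj s x).card + 1 := by
          have hsub : (X.filter fun x => ∃ s ∈ S, G.Adj s x) ⊆
              insert u ((X.erase u).filter fun x => ∃ s ∈ S, G.Adj s x) := by
            intro x hx
            obtain ⟨hx1, hx2⟩ := Finset.mem_filter.1 hx
            by_cases hxu : x = u
            · exact hxu ▸ Finset.mem_insert_self _ _
            · exact Finset.mem_insert_of_mem
                (Finset.mem_filter.2 ⟨Finset.mem_erase.2 ⟨hxu, hx1⟩, hx2⟩)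
          exact (Finset.card_le_card hsub).trans (Finset.card_insert_le _ _)
        have h2 : (B.erase u).card + 1 = B.card := Finset.card_erase_add_one hu
        omega
    · push_neg at hess
      have hsame : ∀ u ∈ B, nu G (B.erase u) = nu G B := by
        intro u hu
        have h1 : nu G (B.erase u) ≤ nu G B := nu_mono (Finset.erase_subset u B)
        have h2 := hess u hu
        obtain ⟨a, ha⟩ := nu_even (G := G) B
        obtain ⟨b, hb⟩ := nu_even (G := G) (B.erase u)
        omega
      by_cases hX : X = ∅
      · subst hX
        obtain ⟨σ, hσ, hσmax⟩ := nu_spec (G := G) B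
        refine ⟨B \ msupp σ, by simp, ?_, ?_⟩
        · intro s hs t ht hst
          obtain ⟨hs1, hs2⟩ := Finset.mem_sdiff.1 hs
          obtain ⟨ht1, ht2⟩ := Finset.mem_sdiff.1 ht
          rw [mem_msupp] at hs2 ht2
          push_neg at hs2 ht2
          exact max_no_aug hσ hσmax hs2 ht2 hst hs1 ht1
        · have hsub : msupp σ ⊆ B := hσ.supp_subset
          have := Finset.card_sdiff_of_subset hsub
          have := Finset.card_le_card hsub
          simp only [Finset.filter_empty, Finset.card_empty]
          omega
      · obtain ⟨x₀, hx₀⟩ := Finset.nonempty_of_ne_empty hX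
        classical
        set K := B.filter (fun y => (sub G B).Reachable x₀ y) with hKdef
        have hKB : K ⊆ B := Finset.filter_subset _ _
        have hx₀B : x₀ ∈ B := hXB hx₀
        have hx₀K : x₀ ∈ K := Finset.mem_filter.2 ⟨hx₀B, SimpleGraph.Reachable.refl _⟩
        have hcl : ∀ y ∈ K, ∀ z, G.Adj y z → z ∈ B → z ∈ K := by
          intro y hy z hadj hzB
          obtain ⟨hyB, hreach⟩ := Finset.mem_filter.1 hy
          exact Finset.mem_filter.2 ⟨hzB, hreach.trans (SimpleGraph.Adj.reachable
            (show (sub G B).Adj y z from ⟨hadj, hyB, hzB⟩))⟩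
        have hXK : X ⊆ K := by
          intro x hx
          by_cases hxx : x = x₀
          · exact hxx ▸ hx₀K
          · exact Finset.mem_filter.2 ⟨hXB hx, SimpleGraph.Adj.reachable
              (show (sub G B).Adj x₀ x from
                ⟨hclq x₀ hx₀ x hx (fun hc => hxx hc.symm), hx₀B, hXB hx⟩)⟩
        have hsplit : nu G B = nu G K + nu G (B \ K) := nu_split hKB hcl
        have hev : ∀ u ∈ K, ∃ σ, mIs G K σ ∧ (msupp σ).card = nu G K ∧ σ u = u := by
          intro u huK
          obtain ⟨σ₀, hσ₀, hc₀⟩ := nu_spec (G := G) (B.erase u)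
          rw [hsame u (hKB huK)] at hc₀
          have hσ₀B : mIs G B σ₀ := hσ₀.mono (Finset.erase_subset u B)
          have hσ₀u : σ₀ u = u := by
            by_contra hc
            exact (Finset.mem_erase.1 (hσ₀.mem hc)).1 rfl
          obtain ⟨hres, hressupp⟩ := hσ₀B.restrict hKB hcl
          obtain ⟨hres2, hressupp2⟩ := hσ₀B.restrict_compl hKB hcl
          have e1 := hres.card_le_nu
          have e2 := hres2.card_le_nu
          rw [show msupp (fun v => if v ∈ K then σ₀ v else v)
              = Finset.univ.filter fun v => (if v ∈ K then σ₀ v else v) ≠ v from rfl,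
            hressupp] at e1
          rw [show msupp (fun v => if v ∈ K then v else σ₀ v)
              = Finset.univ.filter fun v => (if v ∈ K then v else σ₀ v) ≠ v from rfl,
            hressupp2] at e2
          have hsum : (msupp σ₀ ∩ K).card + (msupp σ₀ \ K).card = (msupp σ₀).card :=
            Finset.card_inter_add_card_sdiff _ _
          refine ⟨(fun v => if v ∈ K then σ₀ v else v), hres, ?_, by simp [huK, hσ₀u]⟩
          rw [show msupp (fun v => if v ∈ K then σ₀ v else v)
              = Finset.univ.filter fun v => (if v ∈ K then σ₀ v else v) ≠ v from rfl,
            hressupp]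
          omega
        have hconnK : ∀ y ∈ K, ∀ z ∈ K, (sub G K).Reachable y z := by
          intro y hy z hz
          obtain ⟨wy⟩ := (Finset.mem_filter.1 hy).2
          obtain ⟨wz⟩ := (Finset.mem_filter.1 hz).2
          exact (walk_transfer hcl wy hx₀K).symm.trans (walk_transfer hcl wz hx₀K)
        have hgal : K.card ≤ nu G K + 1 := gallai K hconnK hev
        obtain ⟨ρ, hρ, hρmax⟩ := nu_spec (G := G) (B \ K)
        refine ⟨(B \ K) \ msupp ρ, ?_, ?_, ?_⟩
        · intro s hs
          obtain ⟨hs1, hs2⟩ := Finset.mem_sdiff.1 hs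
          obtain ⟨hs3, hs4⟩ := Finset.mem_sdiff.1 hs1
          exact Finset.mem_sdiff.2 ⟨hs3, fun hsX => hs4 (hXK hsX)⟩
        · intro s hs t ht hst
          obtain ⟨hs1, hs2⟩ := Finset.mem_sdiff.1 hs
          obtain ⟨ht1, ht2⟩ := Finset.mem_sdiff.1 ht
          rw [mem_msupp] at hs2 ht2
          push_neg at hs2 ht2
          exact max_no_aug hρ hρmax hs2 ht2 hst hs1 ht1
        · have hfe : (X.filter fun x => ∃ s ∈ (B \ K) \ msupp ρ, G.Adj s x) = ∅ := by
            rw [Finset.eq_empty_iff_forall_notMem]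
            intro x hx
            obtain ⟨hxX, s, hsS, hadj⟩ := Finset.mem_filter.1 hx
            obtain ⟨hs1, -⟩ := Finset.mem_sdiff.1 hsS
            obtain ⟨hs3, hs4⟩ := Finset.mem_sdiff.1 hs1
            exact hs4 (hcl x (hXK hxX) s hadj.symm hs3)
          have hsubρ : msupp ρ ⊆ B \ K := hρ.supp_subset
          have hc1 := Finset.card_sdiff_of_subset hsubρ
          have hc2 := Finset.card_le_card hsubρ
          have hc3 := Finset.card_sdiff_of_subset hKB
          have hc4 := Finset.card_le_card hKB
          rw [hfe]
          simp only [Finset.card_empty]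
          omega

end FanAux

open Finset

/-- `G.HasFan n` means `G` contains a copy of the fan `F_n`: a vertex `v` (the centre)
and `2n` further distinct vertices such that each pair `a i, b i` forms a triangle
with `v`. -/
def SimpleGraph.HasFan {V : Type*} (G : SimpleGraph V) (n : ℕ) : Prop :=
  ∃ (v : V) (a b : Fin n → V),
    Function.Injective (Sum.elim a b) ∧
    ∀ i, G.Adj v (a i) ∧ G.Adj v (b i) ∧ G.Adj (a i) (b i)

namespace FanAux

variable {V : Type*} [Fintype V] [DecidableEq V] {G : SimpleGraph V}

lemma extract : ∀ (k : ℕ) (B : Finset V) (σ : V → V), mIs G B σ →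
    2 * k ≤ (msupp σ).card + 1 →
    ∃ a b : Fin k → V, (∀ i, G.Adj (a i) (b i) ∧ a i ∈ msupp σ ∧ b i ∈ msupp σ) ∧
      (∀ i j, i ≠ j → a i ≠ a j) ∧ (∀ i j, i ≠ j → b i ≠ b j) ∧ (∀ i j, a i ≠ b j) := by
  intro k
  induction k with
  | zero =>
    intro B σ hσ hcard
    exact ⟨Fin.elim0, Fin.elim0, fun i => i.elim0, fun i => i.elim0,
      fun i => i.elim0, fun i => i.elim0⟩
  | succ k ih =>
    intro B σ hσ hcard
    have hne : (msupp σ).Nonempty := by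
      rw [← Finset.card_pos]; omega
    obtain ⟨x, hx⟩ := hne
    have hxs : σ x ≠ x := mem_msupp.1 hx
    have hyx : σ x ∈ msupp σ := hσ.sigma_mem hxs
    obtain ⟨σ', hσ', hsupp, -, -⟩ := hσ.unpair x
    have hcard' : (msupp σ').card = (msupp σ).card - 2 := by
      rw [hsupp, Finset.card_sdiff_of_subset (by
        intro w hw
        simp only [Finset.mem_insert, Finset.mem_singleton] at hw
        rcases hw with rfl | rfl <;> assumption)]
      rw [Finset.card_insert_of_notMem (by simp [Ne.symm hxs]), Finset.card_singleton]
    have hsub' : msupp σ' ⊆ msupp σ := by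
      rw [hsupp]; exact Finset.sdiff_subset
    have hnotx : ∀ w ∈ msupp σ', w ≠ x ∧ w ≠ σ x := by
      intro w hw
      rw [hsupp, Finset.mem_sdiff] at hw
      simp only [Finset.mem_insert, Finset.mem_singleton, not_or] at hw
      exact hw.2
    obtain ⟨a', b', hmem, ha, hb, hab⟩ := ih B σ' hσ' (by omega)
    refine ⟨Fin.cons x a', Fin.cons (σ x) b', ?_, ?_, ?_, ?_⟩
    · intro i
      refine Fin.cases ?_ ?_ i
      · simp only [Fin.cons_zero]
        exact ⟨hσ.adj hxs, hx, hyx⟩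
      · intro j
        simp only [Fin.cons_succ]
        exact ⟨(hmem j).1, hsub' (hmem j).2.1, hsub' (hmem j).2.2⟩
    · intro i j hij
      rcases Fin.eq_zero_or_eq_succ i with rfl | ⟨i', rfl⟩ <;>
        rcases Fin.eq_zero_or_eq_succ j with rfl | ⟨j', rfl⟩
      · exact absurd rfl hij
      · simp only [Fin.cons_zero, Fin.cons_succ]
        exact fun hc => (hnotx _ (hmem j').2.1).1 hc.symm
      · simp only [Fin.cons_zero, Fin.cons_succ]
        exact (hnotx _ (hmem i').2.1).1
      · simp only [Fin.cons_succ]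
        exact ha i' j' (fun hc => hij (by rw [hc]))
    · intro i j hij
      rcases Fin.eq_zero_or_eq_succ i with rfl | ⟨i', rfl⟩ <;>
        rcases Fin.eq_zero_or_eq_succ j with rfl | ⟨j', rfl⟩
      · exact absurd rfl hij
      · simp only [Fin.cons_zero, Fin.cons_succ]
        exact fun hc => (hnotx _ (hmem j').2.2).2 hc.symm
      · simp only [Fin.cons_zero, Fin.cons_succ]
        exact (hnotx _ (hmem i').2.2).2
      · simp only [Fin.cons_succ]
        exact hb i' j' (fun hc => hij (by rw [hc]))
    · intro i j
      rcases Fin.eq_zero_or_eq_succ i with rfl | ⟨i', rfl⟩ <;>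
        rcases Fin.eq_zero_or_eq_succ j with rfl | ⟨j', rfl⟩
      · simp only [Fin.cons_zero]
        exact Ne.symm hxs
      · simp only [Fin.cons_zero, Fin.cons_succ]
        exact fun hc => (hnotx _ (hmem j').2.2).1 hc.symm
      · simp only [Fin.cons_zero, Fin.cons_succ]
        exact (hnotx _ (hmem i').2.1).2
      · simp only [Fin.cons_succ]
        exact hab i' j'

lemma nu_neighbor_le [DecidableRel G.Adj] {n : ℕ} (hfan : ¬ G.HasFan n) (v : V) :
    nu G (G.neighborFinset v) + 2 ≤ 2 * n + 1 := by
  by_contra hcon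
  push_neg at hcon
  obtain ⟨σ, hσ, hσmax⟩ := nu_spec (G := G) (G.neighborFinset v)
  have hk : 2 * n ≤ (msupp σ).card + 1 := by omega
  obtain ⟨a, b, hmem, ha, hb, hab⟩ := extract n (G.neighborFinset v) σ hσ hk
  refine hfan ⟨v, a, b, ?_, fun i => ?_⟩
  · intro s t hst
    rcases s with i | i <;> rcases t with j | j <;>
      simp only [Sum.elim_inl, Sum.elim_inr] at hst
    · by_contra hc
      exact ha i j (fun he => hc (by rw [he])) hst
    · exact absurd hst (hab i j)
    · exact absurd hst.symm (hab j i)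
    · by_contra hc
      exact hb i j (fun he => hc (by rw [he])) hst
  · have h1 : a i ∈ G.neighborFinset v := hσ.supp_subset (hmem i).2.1
    have h2 : b i ∈ G.neighborFinset v := hσ.supp_subset (hmem i).2.2
    exact ⟨(SimpleGraph.mem_neighborFinset G v _).1 h1, (SimpleGraph.mem_neighborFinset G v _).1 h2,
      (hmem i).1⟩

end FanAux

/-- If `G` contains no fan `F_n`, `A` is a clique in `G` with `|A| > n` all of whose
vertices have degree greater than `2n`, and `v ∈ A`, then there is an independent
set `S ⊆ N(v) \ A` with `|S| ≥ |N(S) ∩ A| + d(v) - 2n`. -/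
theorem exists_large_deficiency_set (n : ℕ) (hn : 1 ≤ n)
    (V : Type*) [Fintype V] [DecidableEq V]
    (G : SimpleGraph V) [DecidableRel G.Adj]
    (hfan : ¬ G.HasFan n)
    (A : Finset V) (hA : G.IsClique ↑A) (hAcard : n < A.card)
    (hdeg : ∀ a ∈ A, 2 * n < G.degree a)
    (v : V) (hv : v ∈ A) :
    ∃ S : Finset V, (↑S : Set V) ⊆ G.neighborSet v \ ↑A ∧
      Gᶜ.IsClique ↑S ∧
      ((A.filter fun a => ∃ s ∈ S, G.Adj s a).card : ℤ) + G.degree v - 2 * n ≤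
        (S.card : ℤ) := by
  set B := G.neighborFinset v with hBdef
  set X := A.erase v with hXdef
  have hXB : X ⊆ B := by
    intro x hx
    obtain ⟨hxv, hxA⟩ := Finset.mem_erase.1 hx
    exact (SimpleGraph.mem_neighborFinset G v _).2
      (hA (Finset.mem_coe.2 hv) (Finset.mem_coe.2 hxA) (Ne.symm hxv))
  have hclq : ∀ x ∈ X, ∀ y ∈ X, x ≠ y → G.Adj x y := by
    intro x hx y hy hxy
    exact hA (Finset.mem_coe.2 (Finset.mem_of_mem_erase hx))
      (Finset.mem_coe.2 (Finset.mem_of_mem_erase hy)) hxy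
  obtain ⟨S, hS, hind, hbound⟩ := FanAux.main_ind B.card B X le_rfl hXB hclq
  have hnu : FanAux.nu G B + 2 ≤ 2 * n + 1 := FanAux.nu_neighbor_le hfan v
  have hnu2 : FanAux.nu G B + 2 ≤ 2 * n := by
    obtain ⟨c, hc⟩ := FanAux.nu_even (G := G) B
    omega
  refine ⟨S, ?_, ?_, ?_⟩
  · intro s hs
    obtain ⟨hs1, hs2⟩ := Finset.mem_sdiff.1 (hS (Finset.mem_coe.1 hs))
    have hadj : G.Adj v s := (SimpleGraph.mem_neighborFinset G v _).1 hs1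
    refine ⟨hadj, fun hsA => ?_⟩
    exact hs2 (Finset.mem_erase.2 ⟨hadj.ne', Finset.mem_coe.1 hsA⟩)
  · intro x hx y hy hxy
    rw [SimpleGraph.compl_adj]
    exact ⟨hxy, hind x (Finset.mem_coe.1 hx) y (Finset.mem_coe.1 hy) hxy⟩
  · have hAf : (A.filter fun a => ∃ s ∈ S, G.Adj s a).card ≤
        (X.filter fun a => ∃ s ∈ S, G.Adj s a).card + 1 := by
      have hsub : (A.filter fun a => ∃ s ∈ S, G.Adj s a) ⊆
          insert v (X.filter fun a => ∃ s ∈ S, G.Adj s a) := by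
        intro x hx
        obtain ⟨hx1, hx2⟩ := Finset.mem_filter.1 hx
        by_cases hxv : x = v
        · exact hxv ▸ Finset.mem_insert_self _ _
        · exact Finset.mem_insert_of_mem
            (Finset.mem_filter.2 ⟨Finset.mem_erase.2 ⟨hxv, hx1⟩, hx2⟩)
      exact (Finset.card_le_card hsub).trans (Finset.card_insert_le _ _)
    have hdegv : G.degree v = B.card := rfl
    rw [hdegv]
    have hfinal : (A.filter fun a => ∃ s ∈ S, G.Adj s a).card + B.card ≤
        S.card + 2 * n := by omega
    push_cast
    omega
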